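/- Suppose s > d. If γ1 < 0 and γ2 < 0, then the zero solution is stable: for every ε ∈ (0,d0] there exist δ > 0 and t1 ≥ t0 such that every admissible solution with v(t1) ≤ δ satisfies v(t) ≤ ε for all t ≥ t1. If γ1 > 0, γ2 > 0 and m ≤ q, then the zero solution is unstable: there exist ε > 0 and t1 ≥ t0 such that for every δ ∈ (0,ε), every admissible solution with v(t1) = δ satisfies v(t) ≥ ε for some t ≥ t1. -/

import Mathlib

open Set

/-- If `(1/η)^q ≤ t` then `t^(-1/q) ≤ η`. -/
lemma aux_rpow_small {q : ℕ} (hq : 0 < q) {η t : ℝ} (hη : 0 < η)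
    (ht : (1/η)^q ≤ t) : t ^ (-(1:ℝ)/(q:ℝ)) ≤ η := by
  have h1 : (0:ℝ) < (1/η)^q := by positivity
  have ht0 : 0 < t := lt_of_lt_of_le h1 ht
  have hqR : (0:ℝ) < q := by exact_mod_cast hq
  have key : 1/η ≤ t ^ ((1:ℝ)/(q:ℝ)) := by
    calc 1/η = (((1/η)^q : ℝ)) ^ ((1:ℝ)/(q:ℝ)) := by
          rw [← Real.rpow_natCast (1/η) q, ← Real.rpow_mul (by positivity),
            mul_one_div, div_self hqR.ne', Real.rpow_one]
      _ ≤ t ^ ((1:ℝ)/(q:ℝ)) := Real.rpow_le_rpow h1.le ht (by positivity)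
  have h2 : 0 < t ^ ((1:ℝ)/(q:ℝ)) := Real.rpow_pos_of_pos ht0 _
  have h3 : t ^ (-(1:ℝ)/(q:ℝ)) = (t ^ ((1:ℝ)/(q:ℝ)))⁻¹ := by
    rw [neg_div, Real.rpow_neg ht0.le]
  rw [h3]
  calc (t ^ ((1:ℝ)/(q:ℝ)))⁻¹ ≤ (1/η)⁻¹ := inv_anti₀ (by positivity) key
    _ = η := by rw [one_div, inv_inv]

/-- Barrier lemma: if the derivative is negative whenever `v x = ε`, and `v a ≤ ε`,
then `v t ≤ ε` for all `t ≥ a`. -/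
lemma aux_barrier {v f' : ℝ → ℝ} {a ε : ℝ}
    (hderiv : ∀ x ≥ a, HasDerivAt v (f' x) x)
    (ha : v a ≤ ε)
    (hbound : ∀ x ≥ a, v x = ε → f' x < 0) :
    ∀ t ≥ a, v t ≤ ε := by
  intro t ht
  have H := image_le_of_deriv_right_lt_deriv_boundary (f := v) (f' := f') (a := a) (b := t)
    (B := fun _ => ε) (B' := fun _ => 0)
    (fun x hx => (hderiv x hx.1).continuousAt.continuousWithinAt)
    (fun x hx => (hderiv x hx.1).hasDerivWithinAt)
    ha (fun x => hasDerivAt_const x ε)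
    (fun x hx hx' => hbound x hx.1 hx')
  exact H ⟨ht, le_rfl⟩

/-- Monotonicity from nonnegative derivative on `[a, ∞)`. -/
lemma aux_mono {v f' : ℝ → ℝ} {a : ℝ}
    (hderiv : ∀ x ≥ a, HasDerivAt v (f' x) x)
    (h0 : ∀ x ≥ a, 0 ≤ f' x) : MonotoneOn v (Ici a) := by
  apply monotoneOn_of_deriv_nonneg (convex_Ici a)
  · exact fun x hx => (hderiv x hx).continuousAt.continuousWithinAt
  · intro x hx
    rw [interior_Ici] at hx
    exact ((hderiv x hx.le).differentiableAt).differentiableWithinAt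
  · intro x hx
    rw [interior_Ici] at hx
    rw [(hderiv x hx.le).deriv]
    exact h0 x hx.le

/-- An admissible solution of the reduced equation
`v'(t) = γ1·t^{−m/q}·v(t)^s + γ2·t^{−n/q}·v(t)^d + ρ(t)` on `[t0,∞)` with values
in `[0,d0]`, where
`|ρ(t)| ≤ M·(t^{−m/q}·v(t)^s + t^{−n/q}·v(t)^d)·(v(t) + t^{−1/q})`. -/
def IsAdmissible2 (q m n s d : ℕ) (γ1 γ2 d0 t0 M : ℝ) (v : ℝ → ℝ) : Prop :=
  (∀ t ≥ t0, v t ∈ Set.Icc (0:ℝ) d0) ∧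
  ∃ ρ : ℝ → ℝ,
    (∀ t ≥ t0, |ρ t| ≤
      M * (t ^ (-(m:ℝ)/(q:ℝ)) * v t ^ s + t ^ (-(n:ℝ)/(q:ℝ)) * v t ^ d)
        * (v t + t ^ (-(1:ℝ)/(q:ℝ)))) ∧
    (∀ t ≥ t0, HasDerivAt v
      (γ1 * t ^ (-(m:ℝ)/(q:ℝ)) * v t ^ s + γ2 * t ^ (-(n:ℝ)/(q:ℝ)) * v t ^ d + ρ t) t)

set_option maxHeartbeats 2000000 in
/-- the fully nonlinear case with `s > d`: stability when
`γ1 < 0` and `γ2 < 0`, instability when `γ1 > 0`, `γ2 > 0` and `m ≤ q`. -/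
theorem stability_instability_s_gt_d
    (q m n s d : ℕ) (hq : 0 < q) (hm : 0 < m) (hmn : m < n)
    (hs : 2 ≤ s) (hd : 2 ≤ d) (hsd : d < s)
    (γ1 γ2 d0 t0 M : ℝ) (hγ1 : γ1 ≠ 0) (hγ2 : γ2 ≠ 0)
    (hd0 : 0 < d0) (ht0 : 0 < t0) (hM : 0 < M) :
    (γ1 < 0 → γ2 < 0 →
      ∀ ε ∈ Set.Ioc (0:ℝ) d0, ∃ δ > 0, ∃ t1 ≥ t0,
        ∀ v : ℝ → ℝ, IsAdmissible2 q m n s d γ1 γ2 d0 t0 M v → v t1 ≤ δ →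
          ∀ t ≥ t1, v t ≤ ε) ∧
    (0 < γ1 → 0 < γ2 → m ≤ q →
      ∃ ε > 0, ∃ t1 ≥ t0, ∀ δ ∈ Set.Ioo (0:ℝ) ε,
        ∀ v : ℝ → ℝ, IsAdmissible2 q m n s d γ1 γ2 d0 t0 M v → v t1 = δ →
          ∃ t ≥ t1, ε ≤ v t) := by
  constructor
  · -- Stability
    intro h1n h2n ε hε
    obtain ⟨hε0, hεd0⟩ := hε
    set g : ℝ := min (-γ1) (-γ2) with hgdef
    have hg0 : 0 < g := lt_min (by linarith) (by linarith)
    set c : ℝ := g / (2*M) with hcdef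
    have hc0 : 0 < c := by positivity
    set b : ℝ := min ε (c/2) with hbdef
    have hb0 : 0 < b := lt_min hε0 (by positivity)
    set t1 : ℝ := max t0 ((1/(c/2))^q) with ht1def
    have ht1t0 : t0 ≤ t1 := le_max_left _ _
    refine ⟨b, hb0, t1, ht1t0, ?_⟩
    rintro v ⟨hrange, ρ, hρ, hode⟩ hvt1 t ht
    have hkey : ∀ x ≥ t1, v x ≤ b := by
      apply aux_barrier (f' := fun x =>
        γ1 * x ^ (-(m:ℝ)/(q:ℝ)) * v x ^ s + γ2 * x ^ (-(n:ℝ)/(q:ℝ)) * v x ^ d + ρ x)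
      · exact fun x hx => hode x (le_trans ht1t0 hx)
      · exact hvt1
      · intro x hx hvx
        have hxt0 : t0 ≤ x := le_trans ht1t0 hx
        have hx0 : 0 < x := lt_of_lt_of_le ht0 hxt0
        have hZ : x ^ (-(1:ℝ)/(q:ℝ)) ≤ c/2 :=
          aux_rpow_small hq (by positivity) (le_trans (le_max_right _ _) hx)
        have hvb : 0 < v x := hvx ▸ hb0
        have hP : 0 < x ^ (-(m:ℝ)/(q:ℝ)) * v x ^ s := by positivity
        have hQ : 0 < x ^ (-(n:ℝ)/(q:ℝ)) * v x ^ d := by positivity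
        have hsum : v x + x ^ (-(1:ℝ)/(q:ℝ)) ≤ c := by
          have : v x ≤ c/2 := hvx ▸ min_le_right ε (c/2)
          linarith
        have hρx := hρ x hxt0
        have hρle : ρ x ≤ g/2 * (x ^ (-(m:ℝ)/(q:ℝ)) * v x ^ s
            + x ^ (-(n:ℝ)/(q:ℝ)) * v x ^ d) := by
          have h1 : ρ x ≤ M * (x ^ (-(m:ℝ)/(q:ℝ)) * v x ^ s
              + x ^ (-(n:ℝ)/(q:ℝ)) * v x ^ d) * (v x + x ^ (-(1:ℝ)/(q:ℝ))) :=
            le_trans (le_abs_self _) hρx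
          have h2 : M * (x ^ (-(m:ℝ)/(q:ℝ)) * v x ^ s
              + x ^ (-(n:ℝ)/(q:ℝ)) * v x ^ d) * (v x + x ^ (-(1:ℝ)/(q:ℝ)))
              ≤ M * (x ^ (-(m:ℝ)/(q:ℝ)) * v x ^ s
              + x ^ (-(n:ℝ)/(q:ℝ)) * v x ^ d) * c :=
            mul_le_mul_of_nonneg_left hsum (by positivity)
          have h3 : M * c = g/2 := by
            rw [hcdef]; field_simp
          nlinarith [hP.le, hQ.le]
        have hgγ1 : g ≤ -γ1 := min_le_left _ _
        have hgγ2 : g ≤ -γ2 := min_le_right _ _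
        nlinarith [mul_le_mul_of_nonneg_right hgγ1 hP.le,
          mul_le_mul_of_nonneg_right hgγ2 hQ.le]
    exact le_trans (hkey t ht) (min_le_left _ _)
  · -- Instability
    intro h1 h2 hmq
    set g : ℝ := min γ1 γ2 with hgdef
    have hg0 : 0 < g := lt_min h1 h2
    set c : ℝ := g / (2*M) with hcdef
    have hc0 : 0 < c := by positivity
    set ε : ℝ := c/2 with hεdef
    have hε0 : 0 < ε := by positivity
    set t1 : ℝ := max t0 (max 1 ((1/ε)^q)) with ht1def
    have ht1t0 : t0 ≤ t1 := le_max_left _ _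
    have ht11 : (1:ℝ) ≤ t1 := le_trans (le_max_left _ _) (le_max_right _ _)
    have ht10 : (0:ℝ) < t1 := lt_of_lt_of_le one_pos ht11
    refine ⟨ε, hε0, t1, ht1t0, ?_⟩
    rintro δ ⟨hδ0, hδε⟩ v ⟨hrange, ρ, hρ, hode⟩ hvt1
    by_contra hcon
    push_neg at hcon
    set F : ℝ → ℝ := fun x =>
      γ1 * x ^ (-(m:ℝ)/(q:ℝ)) * v x ^ s + γ2 * x ^ (-(n:ℝ)/(q:ℝ)) * v x ^ d + ρ x with hFdef
    have hderiv : ∀ x ≥ t1, HasDerivAt v (F x) x := fun x hx => hode x (le_trans ht1t0 hx)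
    have hF : ∀ x ≥ t1, γ1/2 * (x ^ (-(m:ℝ)/(q:ℝ)) * v x ^ s) ≤ F x := by
      intro x hx
      have hxt0 : t0 ≤ x := le_trans ht1t0 hx
      have hx0 : (0:ℝ) < x := lt_of_lt_of_le ht10 hx
      have hv0 : 0 ≤ v x := (hrange x hxt0).1
      have hP : 0 ≤ x ^ (-(m:ℝ)/(q:ℝ)) * v x ^ s := by positivity
      have hQ : 0 ≤ x ^ (-(n:ℝ)/(q:ℝ)) * v x ^ d := by positivity
      have hZ : x ^ (-(1:ℝ)/(q:ℝ)) ≤ ε :=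
        aux_rpow_small hq hε0 (le_trans (le_trans (le_max_right _ _) (le_max_right _ _)) hx)
      have hsum : v x + x ^ (-(1:ℝ)/(q:ℝ)) ≤ c := by
        have := hcon x hx
        have hεc : ε + ε = c := by rw [hεdef]; ring
        linarith
      have hρx := hρ x hxt0
      have h1' : -ρ x ≤ M * (x ^ (-(m:ℝ)/(q:ℝ)) * v x ^ s
          + x ^ (-(n:ℝ)/(q:ℝ)) * v x ^ d) * (v x + x ^ (-(1:ℝ)/(q:ℝ))) :=
        le_trans (neg_le_abs _) hρx
      have h2' : M * (x ^ (-(m:ℝ)/(q:ℝ)) * v x ^ s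
          + x ^ (-(n:ℝ)/(q:ℝ)) * v x ^ d) * (v x + x ^ (-(1:ℝ)/(q:ℝ)))
          ≤ M * (x ^ (-(m:ℝ)/(q:ℝ)) * v x ^ s
          + x ^ (-(n:ℝ)/(q:ℝ)) * v x ^ d) * c :=
        mul_le_mul_of_nonneg_left hsum (by positivity)
      have h3 : M * c = g/2 := by rw [hcdef]; field_simp
      have hgγ1 : g ≤ γ1 := min_le_left _ _
      have hgγ2 : g ≤ γ2 := min_le_right _ _
      simp only [hFdef]
      nlinarith [mul_le_mul_of_nonneg_right hgγ1 hP,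
        mul_le_mul_of_nonneg_right hgγ2 hQ]
    have hF0 : ∀ x ≥ t1, 0 ≤ F x := by
      intro x hx
      have hx0 : (0:ℝ) < x := lt_of_lt_of_le ht10 hx
      have hv0 : 0 ≤ v x := (hrange x (le_trans ht1t0 hx)).1
      have : (0:ℝ) ≤ γ1/2 * (x ^ (-(m:ℝ)/(q:ℝ)) * v x ^ s) := by positivity
      exact le_trans this (hF x hx)
    have hmono : MonotoneOn v (Ici t1) := aux_mono hderiv hF0
    have hδle : ∀ x ≥ t1, δ ≤ v x := by
      intro x hx
      have := hmono self_mem_Ici hx hx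
      rwa [hvt1] at this
    set K : ℝ := γ1/2 * δ^s with hKdef
    have hK0 : 0 < K := by positivity
    have hFK : ∀ x ≥ t1, K * x⁻¹ ≤ F x := by
      intro x hx
      have hx0 : (0:ℝ) < x := lt_of_lt_of_le ht10 hx
      have hx1 : (1:ℝ) ≤ x := le_trans ht11 hx
      have hmqR : (m:ℝ)/(q:ℝ) ≤ 1 := by
        rw [div_le_one (by exact_mod_cast hq)]
        exact_mod_cast hmq
      have hexp : -(1:ℝ) ≤ -(m:ℝ)/(q:ℝ) := by rw [neg_div]; linarith
      have hrp : x⁻¹ ≤ x ^ (-(m:ℝ)/(q:ℝ)) := by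
        calc x⁻¹ = x ^ (-1:ℝ) := (Real.rpow_neg_one x).symm
          _ ≤ x ^ (-(m:ℝ)/(q:ℝ)) := Real.rpow_le_rpow_of_exponent_le hx1 hexp
      have hps : δ^s ≤ v x ^ s := pow_le_pow_left₀ hδ0.le (hδle x hx) s
      have h5 : x⁻¹ * δ^s ≤ x ^ (-(m:ℝ)/(q:ℝ)) * v x ^ s :=
        mul_le_mul hrp hps (by positivity) (by positivity)
      calc K * x⁻¹ = γ1/2 * (x⁻¹ * δ^s) := by rw [hKdef]; ring
        _ ≤ γ1/2 * (x ^ (-(m:ℝ)/(q:ℝ)) * v x ^ s) :=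
            mul_le_mul_of_nonneg_left h5 (by positivity)
        _ ≤ F x := hF x hx
    have hcomp : ∀ x ≥ t1, δ + K * (Real.log x - Real.log t1) ≤ v x := by
      have hmono2 : MonotoneOn (fun x => v x - (δ + K * (Real.log x - Real.log t1))) (Ici t1) := by
        apply aux_mono (f' := fun x => F x - K * x⁻¹)
        · intro x hx
          have hx0 : (0:ℝ) < x := lt_of_lt_of_le ht10 hx
          have hw : HasDerivAt (fun y => δ + K * (Real.log y - Real.log t1)) (K * x⁻¹) x :=
            (((Real.hasDerivAt_log hx0.ne').sub_const (Real.log t1)).const_mul K).const_add δ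
          exact (hderiv x hx).sub hw
        · intro x hx; linarith [hFK x hx]
      intro x hx
      have h := hmono2 self_mem_Ici hx hx
      have e : v t1 - (δ + K * (Real.log t1 - Real.log t1)) = 0 := by rw [hvt1]; ring
      have : (0:ℝ) ≤ v x - (δ + K * (Real.log x - Real.log t1)) := by
        simp only at h
        linarith [h, e]
      linarith
    set T : ℝ := t1 * Real.exp ((ε - δ)/K) with hTdef
    have hTt1 : t1 ≤ T :=
      le_mul_of_one_le_right ht10.le (Real.one_le_exp (div_nonneg (by linarith) hK0.le))
    have hlogT : Real.log T = Real.log t1 + (ε - δ)/K := by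
      rw [hTdef, Real.log_mul ht10.ne' (Real.exp_ne_zero _), Real.log_exp]
    have hwT : δ + K * (Real.log T - Real.log t1) = ε := by
      rw [hlogT]
      have e : Real.log t1 + (ε - δ)/K - Real.log t1 = (ε - δ)/K := by ring
      rw [e, mul_div_cancel₀ _ hK0.ne']
      ring
    have h6 := hcomp T hTt1
    have h7 := hcon T hTt1
    rw [hwT] at h6
    linarith
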